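/- Let X be a nonempty finite type and p, q : X → ℝ probability mass functions with p(x) > 0 and q(x) > 0 for all x. For every function D : X → ℝ with 0 < D(x) < 1 for all x, one has Σ_{x∈X} p(x) log D(x) + Σ_{x∈X} q(x) log(1 − D(x)) ≤ Σ_{x∈X} p(x) log(p(x)/(p(x)+q(x))) + Σ_{x∈X} q(x) log(q(x)/(p(x)+q(x))), with equality if and only if D(x) = p(x)/(p(x)+q(x)) for all x ∈ X. -/

import Mathlib

open Finset

lemma stmt_17_key (a b t : ℝ) (ha : 0 < a) (hb : 0 < b) (ht0 : 0 < t) (ht1 : t < 1) :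
    (a * Real.log t + b * Real.log (1 - t) ≤
      a * Real.log (a / (a + b)) + b * Real.log (b / (a + b))) ∧
    (a * Real.log t + b * Real.log (1 - t) =
      a * Real.log (a / (a + b)) + b * Real.log (b / (a + b)) → t = a / (a + b)) := by
  have hs0 : 0 < a + b := by linarith
  have h1t : 0 < 1 - t := by linarith
  have hA : Real.log t - Real.log (a / (a + b)) = Real.log (t * (a + b) / a) := by
    rw [Real.log_div (by positivity) ha.ne', Real.log_mul ht0.ne' hs0.ne',
      Real.log_div ha.ne' hs0.ne']; ring
  have hB : Real.log (1 - t) - Real.log (b / (a + b)) = Real.log ((1 - t) * (a + b) / b) := by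
    rw [Real.log_div (by positivity) hb.ne', Real.log_mul h1t.ne' hs0.ne',
      Real.log_div hb.ne' hs0.ne']; ring
  have lA : Real.log (t * (a + b) / a) ≤ t * (a + b) / a - 1 :=
    Real.log_le_sub_one_of_pos (by positivity)
  have lB : Real.log ((1 - t) * (a + b) / b) ≤ (1 - t) * (a + b) / b - 1 :=
    Real.log_le_sub_one_of_pos (by positivity)
  have hzero : a * (t * (a + b) / a - 1) + b * ((1 - t) * (a + b) / b - 1) = 0 := by
    field_simp; ring
  constructor
  · nlinarith [mul_le_mul_of_nonneg_left lA ha.le, mul_le_mul_of_nonneg_left lB hb.le]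
  · intro heq
    by_contra hne
    have hne1 : t * (a + b) / a ≠ 1 := by
      intro h
      apply hne
      field_simp at h ⊢
      linarith
    have lA' : Real.log (t * (a + b) / a) < t * (a + b) / a - 1 :=
      Real.log_lt_sub_one_of_pos (by positivity) hne1
    nlinarith [mul_lt_mul_of_pos_left lA' ha, mul_le_mul_of_nonneg_left lB hb.le]

theorem stmt_17 {X : Type*} [Fintype X] [Nonempty X] (p q : X → ℝ)
    (hp : ∀ x, 0 < p x) (hq : ∀ x, 0 < q x)
    (hp1 : ∑ x, p x = 1) (hq1 : ∑ x, q x = 1)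
    (D : X → ℝ) (hD : ∀ x, 0 < D x ∧ D x < 1) :
    ((∑ x, p x * Real.log (D x)) + ∑ x, q x * Real.log (1 - D x) ≤
        (∑ x, p x * Real.log (p x / (p x + q x))) +
          ∑ x, q x * Real.log (q x / (p x + q x))) ∧
      ((∑ x, p x * Real.log (D x)) + ∑ x, q x * Real.log (1 - D x) =
          (∑ x, p x * Real.log (p x / (p x + q x))) +
            ∑ x, q x * Real.log (q x / (p x + q x)) ↔
        ∀ x, D x = p x / (p x + q x)) := by
  have key := fun x => stmt_17_key (p x) (q x) (D x) (hp x) (hq x) (hD x).1 (hD x).2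
  have hLHS : (∑ x, p x * Real.log (D x)) + ∑ x, q x * Real.log (1 - D x) =
      ∑ x, (p x * Real.log (D x) + q x * Real.log (1 - D x)) := by
    rw [Finset.sum_add_distrib]
  have hRHS : (∑ x, p x * Real.log (p x / (p x + q x))) +
      ∑ x, q x * Real.log (q x / (p x + q x)) =
      ∑ x, (p x * Real.log (p x / (p x + q x)) + q x * Real.log (q x / (p x + q x))) := by
    rw [Finset.sum_add_distrib]
  rw [hLHS, hRHS]
  have hle : ∀ x ∈ Finset.univ (α := X),
      p x * Real.log (D x) + q x * Real.log (1 - D x) ≤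
      p x * Real.log (p x / (p x + q x)) + q x * Real.log (q x / (p x + q x)) :=
    fun x _ => (key x).1
  refine ⟨Finset.sum_le_sum hle, ?_, ?_⟩
  · intro h x
    exact (key x).2 ((Finset.sum_eq_sum_iff_of_le hle).mp h x (Finset.mem_univ x))
  · intro h
    refine Finset.sum_congr rfl fun x _ => ?_
    have hs : p x + q x ≠ 0 := by have := hp x; have := hq x; positivity
    have h1 : (1:ℝ) - p x / (p x + q x) = q x / (p x + q x) := by field_simp; ring
    rw [h x, h1]
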